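/- arXiv:1902.10983 — 2 statements merged into one kernel-verified Lean document; each statement's English description precedes it below -/
import Mathlib

section
/- For every even ℓ ≥ 2, the word δ = x₁x₂⋯x_ℓ x₁ x_ℓ x₂ x_{ℓ−1} x₃ x_{ℓ−2} ⋯ x_{ℓ/2} x_{ℓ/2+1} has locality number 2, while every marking sequence obtained by the left-to-right greedy strategy (always mark the unmarked letter whose leftmost occurrence is leftmost) achieves marking number at least ℓ/2. Hence the approximation ratio of this greedy strategy on δ is at least ℓ/4. -/
noncomputable section

attribute [local instance] Classical.propDecidable

variable {X : Type*} [DecidableEq X]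

/-- Number of maximal blocks of `true`s in a list of booleans, where the first
argument is the preceding symbol. -/
def blocksAux : Bool → List Bool → ℕ
  | _, [] => 0
  | prev, b :: rest => (if b = true ∧ prev = false then 1 else 0) + blocksAux b rest

/-- Number of maximal contiguous blocks of positions of `w` whose letter lies in `S`. -/
def blockCount (w : List X) (S : List X) : ℕ :=
  blocksAux false (w.map (fun x => decide (x ∈ S)))

/-- `σ` is a marking sequence for `w`: an enumeration, without repetition,
of the alphabet of `w`. -/
def IsMarkingSeq (w σ : List X) : Prop := σ.Nodup ∧ σ.toFinset = w.toFinset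

/-- The marking number of the marking sequence `σ` on `w`: the maximum, over all
stages `i`, of the number of maximal contiguous marked blocks after marking the
first `i` letters of `σ`. -/
def markingNumber (w σ : List X) : ℕ :=
  Finset.sup (Finset.range (σ.length + 1)) (fun i => blockCount w (σ.take i))

/-- The locality number of `w`: the minimum marking number over all marking
sequences for `w`. -/
def locality (w : List X) : ℕ :=
  sInf {n | ∃ σ, IsMarkingSeq w σ ∧ markingNumber w σ = n}

/-- `σ` is a marking sequence for `w` produced by the left-to-right greedy
strategy: at each step the chosen letter is an unmarked letter whose leftmost
occurrence in `w` is leftmost among all unmarked letters. -/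
def IsLRGreedy (w σ : List X) : Prop :=
  IsMarkingSeq w σ ∧
    ∀ i c, σ[i]? = some c →
      ∀ y ∈ w, y ∉ σ.take i → w.idxOf c ≤ w.idxOf y

/-- The word `δ = x₁x₂⋯x_ℓ x₁ x_ℓ x₂ x_{ℓ-1} x₃ x_{ℓ-2} ⋯ x_{ℓ/2} x_{ℓ/2+1}` over
the distinct letters `1, ..., ℓ`. -/
def deltaWord (ℓ : ℕ) : List ℕ :=
  List.range' 1 ℓ ++ (List.range' 1 (ℓ / 2)).flatMap (fun j => [j, ℓ + 1 - j])

theorem blocksAux_append (p : Bool) (l₁ l₂ : List Bool) :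
    blocksAux p (l₁ ++ l₂) = blocksAux p l₁ + blocksAux (l₁.getLastD p) l₂ := by
  induction l₁ generalizing p with
  | nil => simp [blocksAux]
  | cons b t ih =>
    rw [List.cons_append]
    simp only [blocksAux, List.getLastD_cons, ih]
    omega

theorem blocksAux_replicate_false (p : Bool) (n : ℕ) :
    blocksAux p (List.replicate n false) = 0 := by
  induction n generalizing p with
  | zero => rfl
  | succ n ih => simp [List.replicate_succ, blocksAux, ih]

theorem blocksAux_replicate_true (p : Bool) (n : ℕ) :
    blocksAux p (List.replicate n true) = if n = 0 ∨ p = true then 0 else 1 := by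
  induction n generalizing p with
  | zero => simp [blocksAux]
  | succ n ih =>
    simp only [List.replicate_succ, blocksAux, ih true]
    cases p <;> simp

theorem getLastD_replicate (p b : Bool) (n : ℕ) :
    (List.replicate n b).getLastD p = if n = 0 then p else b := by
  cases n with
  | zero => rfl
  | succ n =>
    rw [List.replicate_succ']
    simp [List.getLastD_concat]

theorem flatMap_eq_flatten_replicate {α β : Type*} (g : α → List β) (r : List β) :
    ∀ (l : List α), (∀ x ∈ l, g x = r) → l.flatMap g = (List.replicate l.length r).flatten
  | [], _ => rfl
  | a :: t, h => by
    rw [List.flatMap_cons, List.length_cons, List.replicate_succ, List.flatten_cons,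
      h a (by simp), flatMap_eq_flatten_replicate g r t (fun x hx => h x (by simp [hx]))]

theorem flatten_replicate_pair {β : Type*} (n : ℕ) (b : β) :
    (List.replicate n [b, b]).flatten = List.replicate (2 * n) b := by
  induction n with
  | zero => rfl
  | succ n ih =>
    rw [List.replicate_succ, List.flatten_cons, ih]
    have : 2 * (n + 1) = (2 * n) + 1 + 1 := by ring
    rw [this, List.replicate_succ, List.replicate_succ]
    rfl

theorem blocksAux_flatten_tf (n : ℕ) :
    blocksAux false (List.replicate n [true, false]).flatten = n := by
  induction n with
  | zero => rfl
  | succ n ih =>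
    rw [List.replicate_succ, List.flatten_cons]
    show blocksAux false ([true, false] ++ _) = n + 1
    rw [blocksAux_append]
    simp [blocksAux, ih]
    omega

theorem indexOf_range' (s n x : ℕ) (h1 : s ≤ x) (h2 : x < s + n) :
    (List.range' s n).idxOf x = x - s := by
  induction n generalizing s with
  | zero => omega
  | succ n ih =>
    rw [List.range'_succ]
    rcases Nat.eq_or_lt_of_le h1 with rfl | hlt
    · simp [List.idxOf_cons_self]
    · rw [List.idxOf_cons_ne _ (by omega), ih (s+1) (by omega) (by omega)]
      omega

theorem perm_pairs (L : ℕ) : ∀ k, 2 * k ≤ L →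
    ((List.range' 1 k).flatMap (fun j => [j, L + 1 - j])).Perm
      (List.range' 1 k ++ List.range' (L + 1 - k) k)
  | 0, _ => by simp
  | (k+1), h => by
    rw [List.range'_1_concat, List.flatMap_append]
    have ih := perm_pairs L k (by omega)
    refine (ih.append_right _).trans ?_
    rw [List.append_assoc]
    refine (List.Perm.append_left _ (List.perm_append_comm)).trans ?_
    have h1 : List.range' (L + 1 - (k+1)) (k+1) = (L - k) :: List.range' (L + 1 - k) k := by
      rw [show L + 1 - (k+1) = L - k from by omega, List.range'_succ,
        show L - k + 1 = L + 1 - k from by omega]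
    rw [h1]
    simp only [List.flatMap_cons, List.flatMap_nil, List.append_nil, List.append_assoc,
      show L + 1 - (1 + k) = L - k from by omega, List.cons_append, List.nil_append,
      List.singleton_append]
    exact List.Perm.refl _

theorem getLastD_append (l₁ l₂ : List Bool) (p : Bool) :
    (l₁ ++ l₂).getLastD p = l₂.getLastD (l₁.getLastD p) := by
  induction l₁ generalizing p with
  | nil => rfl
  | cons a t ih => rw [List.cons_append, List.getLastD_cons, ih, List.getLastD_cons]

theorem mem_range1 {s n x : ℕ} : x ∈ List.range' s n ↔ s ≤ x ∧ x < s + n := by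
  rw [List.mem_range']
  constructor
  · rintro ⟨i, hi, rfl⟩; omega
  · intro h; exact ⟨x - s, by omega, by omega⟩

theorem map_eq_replicate {α : Type*} (f : α → Bool) (l : List α) (b : Bool)
    (h : ∀ x ∈ l, f x = b) : l.map f = List.replicate l.length b := by
  induction l with
  | nil => rfl
  | cons a t ih =>
    rw [List.map_cons, List.length_cons, List.replicate_succ, h a (by simp),
      ih (fun x hx => h x (by simp [hx]))]

/-- the good marking sequence -/
def gseq (ℓ m : ℕ) : List ℕ := (List.range' 1 m).flatMap (fun j => [j, ℓ + 1 - j])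

theorem gseq_length (ℓ m : ℕ) : (gseq ℓ m).length = 2 * m := by
  unfold gseq
  rw [List.length_flatMap]
  have h2 : (List.length ∘ fun j : ℕ => [j, ℓ + 1 - j]) = fun _ : ℕ => 2 := rfl
  rw [show (fun a : ℕ => [a, ℓ + 1 - a].length) = fun _ : ℕ => 2 from rfl, List.map_const', List.sum_replicate, List.length_range', smul_eq_mul]
  omega

theorem mem_gseq (ℓ m j x : ℕ) (hm : ℓ = 2*m) (hj : j ≤ m) :
    x ∈ gseq ℓ j ↔ (1 ≤ x ∧ x ≤ j) ∨ (ℓ + 1 - j ≤ x ∧ x ≤ ℓ) := by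
  unfold gseq
  simp only [List.mem_flatMap, mem_range1, List.mem_cons, List.mem_singleton]
  constructor
  · rintro ⟨k, hk, rfl | hx⟩
    · omega
    · simp only [List.not_mem_nil, or_false] at hx
      omega
  · rintro (h | h)
    · exact ⟨x, by omega, Or.inl rfl⟩
    · exact ⟨ℓ + 1 - x, by omega, Or.inr (Or.inl (by omega))⟩

theorem gseq_take_even (ℓ m j : ℕ) (hj : j ≤ m) :
    (gseq ℓ m).take (2*j) = gseq ℓ j := by
  unfold gseq
  have h : List.range' 1 m = List.range' 1 j ++ List.range' (1+j) (m-j) := by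
    rw [List.range'_append_1]; congr 1; omega
  rw [h, List.flatMap_append, List.take_left' (by
    have := gseq_length ℓ j
    unfold gseq at this
    omega)]

theorem gseq_take_odd (ℓ m j : ℕ) (hj : j < m) :
    (gseq ℓ m).take (2*j+1) = gseq ℓ j ++ [j+1] := by
  unfold gseq
  have h : List.range' 1 m = (List.range' 1 j ++ [1+j]) ++ List.range' (1+(j+1)) (m-(j+1)) := by
    rw [← List.range'_1_concat, List.range'_append_1]; congr 1; omega
  rw [h, List.flatMap_append, List.flatMap_append]
  have hlen : ((List.range' 1 j).flatMap (fun j => [j, ℓ + 1 - j])).length = 2*j := by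
    have := gseq_length ℓ j; unfold gseq at this; exact this
  rw [List.append_assoc, show 2*j+1 = ((List.range' 1 j).flatMap (fun j => [j, ℓ + 1 - j])).length + 1 from by omega,
    List.take_append]
  congr 1
  · simp [show 1 + j = j + 1 from by omega]
  · rw [Nat.add_sub_cancel_left]; simp [show 1 + j = j + 1 from by omega]


theorem map_mem_first (ℓ : ℕ) (f : ℕ → Bool) (a c : ℕ) (hac : a + c ≤ ℓ)
    (hlow : ∀ x, 1 ≤ x → x ≤ a → f x = true)
    (hmid : ∀ x, a < x → x ≤ ℓ - c → f x = false)
    (hhigh : ∀ x, ℓ - c < x → x ≤ ℓ → f x = true) :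
    (List.range' 1 ℓ).map f =
      List.replicate a true ++ List.replicate (ℓ - (a+c)) false ++ List.replicate c true := by
  have h1 : List.range' 1 a ++ List.range' (1+a) (ℓ-(a+c)) = List.range' 1 (ℓ - (a+c) + a) :=
    by rw [List.range'_append_1]; congr 1; omega
  have h : List.range' 1 ℓ =
      (List.range' 1 a ++ List.range' (1+a) (ℓ-(a+c))) ++ List.range' (1+(ℓ-(a+c)+a)) c := by
    rw [h1, List.range'_append_1]; congr 1; omega
  rw [h, List.map_append, List.map_append]
  congr 1
  · congr 1
    · rw [map_eq_replicate _ _ true (fun x hx => by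
        rw [mem_range1] at hx; exact hlow x (by omega) (by omega))]
      simp
    · rw [map_eq_replicate _ _ false (fun x hx => by
        rw [mem_range1] at hx; exact hmid x (by omega) (by omega))]
      simp
  · rw [map_eq_replicate _ _ true (fun x hx => by
      rw [mem_range1] at hx; exact hhigh x (by omega) (by omega))]
    simp

theorem map_mem_second (ℓ m : ℕ) (f : ℕ → Bool) (a c : ℕ) (hm : ℓ = 2*m)
    (hca : c ≤ a) (hac1 : a ≤ c + 1) (ham : a ≤ m)
    (hlow : ∀ x, 1 ≤ x → x ≤ a → f x = true)
    (hmid : ∀ x, a < x → x ≤ ℓ - c → f x = false)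
    (hhigh : ∀ x, ℓ - c < x → x ≤ ℓ → f x = true) :
    (gseq ℓ m).map f =
      List.replicate (a + c) true ++ List.replicate (2*m - (a+c)) false := by
  unfold gseq
  have h1 : List.range' 1 c ++ List.range' (1+c) (a-c) = List.range' 1 (a - c + c) :=
    by rw [List.range'_append_1]; congr 1; omega
  have h : List.range' 1 m =
      (List.range' 1 c ++ List.range' (1+c) (a-c)) ++ List.range' (1+a) (m-a) := by
    rw [h1, show a - c + c = a from by omega, List.range'_append_1]
    congr 1
    omega
  rw [h, List.flatMap_append, List.flatMap_append, List.map_append, List.map_append,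
    List.map_flatMap, List.map_flatMap, List.map_flatMap]
  have hc1 : ((List.range' 1 c).flatMap fun j => List.map f [j, ℓ+1-j])
      = List.replicate (2*c) true := by
    rw [flatMap_eq_flatten_replicate _ [true, true] _ (fun x hx => by
      rw [mem_range1] at hx
      simp only [List.map_cons, List.map_nil]
      rw [hlow x (by omega) (by omega), hhigh (ℓ+1-x) (by omega) (by omega)]),
      List.length_range', flatten_replicate_pair]
  have hc3 : ((List.range' (1+a) (m-a)).flatMap fun j => List.map f [j, ℓ+1-j])
      = List.replicate (2*(m-a)) false := by
    rw [flatMap_eq_flatten_replicate _ [false, false] _ (fun x hx => by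
      rw [mem_range1] at hx
      simp only [List.map_cons, List.map_nil]
      rw [hmid x (by omega) (by omega), hmid (ℓ+1-x) (by omega) (by omega)]),
      List.length_range', flatten_replicate_pair]
  rw [hc1, hc3]
  by_cases heq : a = c
  · rw [show a - c = 0 from by omega]
    simp only [List.range'_zero, List.flatMap_nil, List.append_nil]
    rw [show a + c = 2*c from by omega, show 2*m - (2*c) = 2*(m-a) from by omega]
  · have ha : a = c + 1 := by omega
    rw [show a - c = 1 from by omega, List.range'_one]
    simp only [List.flatMap_cons, List.flatMap_nil, List.append_nil, List.map_cons, List.map_nil]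
    rw [hlow (1+c) (by omega) (by omega), hmid (ℓ+1-(1+c)) (by omega) (by omega)]
    rw [show a + c = 2*c + 1 from by omega, show 2*m - (2*c+1) = 2*(m-a) + 1 from by omega]
    rw [List.replicate_succ', List.replicate_succ]
    simp [List.append_assoc]

theorem blockCount_congr {X : Type*} [DecidableEq X] (w S : List X) (f : X → Bool)
    (hf : ∀ x ∈ w, (f x = true ↔ x ∈ S)) :
    blockCount w S = blocksAux false (w.map f) := by
  unfold blockCount
  congr 1
  apply List.map_congr_left
  intro x hx
  cases hfx : f x with
  | true => simp [decide_eq_true ((hf x hx).mp hfx)]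
  | false =>
    refine decide_eq_false (fun h => ?_)
    rw [(hf x hx).mpr h] at hfx
    cases hfx

theorem blocks_pattern (a s u t : ℕ) :
    blocksAux false (List.replicate a true ++ (List.replicate s false ++
      (List.replicate u true ++ List.replicate t false))) =
    (if a = 0 then 0 else 1) + (if u = 0 ∨ (s = 0 ∧ a ≠ 0) then 0 else 1) := by
  rw [blocksAux_append, blocksAux_append, blocksAux_append]
  simp only [blocksAux_replicate_false, blocksAux_replicate_true, getLastD_replicate]
  by_cases ha : a = 0 <;> by_cases hs : s = 0 <;> by_cases hu : u = 0 <;>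
    simp [ha, hs, hu]

theorem delta_eq (ℓ m : ℕ) (hm : ℓ = 2*m) :
    deltaWord ℓ = List.range' 1 ℓ ++ gseq ℓ m := by
  subst hm
  unfold deltaWord gseq
  rw [show 2*m/2 = m from by omega]

theorem mem_delta (ℓ m x : ℕ) (hm : ℓ = 2*m) (hm1 : 1 ≤ m) :
    x ∈ deltaWord ℓ ↔ 1 ≤ x ∧ x ≤ ℓ := by
  rw [delta_eq ℓ m hm, List.mem_append, mem_range1, mem_gseq ℓ m m x hm le_rfl]
  omega

theorem toFinset_delta (ℓ m : ℕ) (hm : ℓ = 2*m) (hm1 : 1 ≤ m) :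
    (deltaWord ℓ).toFinset = (List.range' 1 ℓ).toFinset := by
  ext x
  rw [List.mem_toFinset, List.mem_toFinset, mem_delta ℓ m x hm hm1, mem_range1]
  omega

theorem blockCount_stage (ℓ m i : ℕ) (hm : ℓ = 2*m) (hm1 : 1 ≤ m) (hi : i ≤ ℓ) :
    blockCount (deltaWord ℓ) ((gseq ℓ m).take i) =
      if i = 0 then 0 else if i = ℓ then 1 else 2 := by
  have ha : (i+1)/2 + i/2 = i := by omega
  set a := (i+1)/2 with hadef
  set c := i/2 with hcdef
  set S := (gseq ℓ m).take i with hS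
  have hmem : ∀ x, 1 ≤ x → x ≤ ℓ → (x ∈ S ↔ (x ≤ a ∨ ℓ + 1 - c ≤ x)) := by
    intro x hx1 hx2
    rcases Nat.even_or_odd i with ⟨j, hj⟩ | ⟨j, hj⟩
    · rw [hS, show i = 2*j from by omega, gseq_take_even ℓ m j (by omega),
        mem_gseq ℓ m j x hm (by omega)]
      omega
    · rw [hS, show i = 2*j+1 from by omega, gseq_take_odd ℓ m j (by omega), List.mem_append,
        mem_gseq ℓ m j x hm (by omega), List.mem_singleton]
      omega
  set f : ℕ → Bool := fun x => decide (x ≤ a ∨ ℓ + 1 - c ≤ x) with hfdef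
  have hlow : ∀ x, 1 ≤ x → x ≤ a → f x = true :=
    fun x h1 h2 => decide_eq_true (Or.inl h2)
  have hmid : ∀ x, a < x → x ≤ ℓ - c → f x = false :=
    fun x h1 h2 => decide_eq_false (by omega)
  have hhigh : ∀ x, ℓ - c < x → x ≤ ℓ → f x = true :=
    fun x h1 h2 => decide_eq_true (Or.inr (by omega))
  rw [blockCount_congr (deltaWord ℓ) S f (fun x hx => by
    rw [mem_delta ℓ m x hm hm1] at hx
    rw [hmem x hx.1 hx.2, hfdef]
    simp)]
  rw [delta_eq ℓ m hm, List.map_append,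
    map_mem_first ℓ f a c (by omega) hlow hmid hhigh,
    map_mem_second ℓ m f a c hm (by omega) (by omega) (by omega) hlow hmid hhigh]
  have hassoc : (List.replicate a true ++ List.replicate (ℓ - (a+c)) false ++
        List.replicate c true) ++
      (List.replicate (a + c) true ++ List.replicate (2*m - (a+c)) false) =
      List.replicate a true ++ (List.replicate (ℓ - (a+c)) false ++
        (List.replicate (c + (a + c)) true ++ List.replicate (2*m - (a+c)) false)) := by
    rw [List.replicate_add c (a+c) true]
    simp only [List.append_assoc]
  rw [hassoc, blocks_pattern]
  by_cases h0 : i = 0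
  · rw [if_pos h0, if_pos (show a = 0 from by omega),
      if_pos (Or.inl (show c + (a + c) = 0 from by omega))]
  · by_cases hl : i = ℓ
    · rw [if_neg h0, if_pos hl, if_neg (show ¬ a = 0 from by omega),
        if_pos (Or.inr ⟨show ℓ - (a+c) = 0 from by omega, show a ≠ 0 from by omega⟩)]
    · rw [if_neg h0, if_neg hl, if_neg (show ¬ a = 0 from by omega), if_neg (show
        ¬ (c + (a + c) = 0 ∨ (ℓ - (a+c) = 0 ∧ a ≠ 0)) from by
          push_neg
          exact ⟨by omega, fun _ => by omega⟩)]

theorem gseq_perm (ℓ m : ℕ) (hm : ℓ = 2*m) : (gseq ℓ m).Perm (List.range' 1 ℓ) := by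
  have h := perm_pairs ℓ m (by omega)
  have h2 : List.range' 1 m ++ List.range' (ℓ + 1 - m) m = List.range' 1 ℓ := by
    rw [show ℓ + 1 - m = 1 + m from by omega, List.range'_append_1,
      show m + m = ℓ from by omega]
  rw [← h2]
  exact h

theorem gseq_marking (ℓ m : ℕ) (hm : ℓ = 2*m) (hm1 : 1 ≤ m) :
    IsMarkingSeq (deltaWord ℓ) (gseq ℓ m) ∧ markingNumber (deltaWord ℓ) (gseq ℓ m) = 2 := by
  have hperm := gseq_perm ℓ m hm
  have hnd : (gseq ℓ m).Nodup := hperm.nodup_iff.mpr (List.nodup_range')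
  have htf : (gseq ℓ m).toFinset = (deltaWord ℓ).toFinset := by
    rw [List.toFinset_eq_of_perm _ _ hperm, toFinset_delta ℓ m hm hm1]
  refine ⟨⟨hnd, htf⟩, ?_⟩
  have hlen : (gseq ℓ m).length = ℓ := by rw [gseq_length]; omega
  unfold markingNumber
  rw [hlen]
  apply le_antisymm
  · apply Finset.sup_le
    intro i hi
    rw [Finset.mem_range] at hi
    rw [blockCount_stage ℓ m i hm hm1 (by omega)]
    split_ifs <;> omega
  · have h1 : (1 : ℕ) ∈ Finset.range (ℓ + 1) := by
      rw [Finset.mem_range]; omega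
    refine le_trans (le_of_eq ?_) (Finset.le_sup (f := fun i => blockCount (deltaWord ℓ) ((gseq ℓ m).take i)) h1)
    show 2 = blockCount (deltaWord ℓ) ((gseq ℓ m).take 1)
    rw [blockCount_stage ℓ m 1 hm hm1 (by omega), if_neg (by omega), if_neg (by omega)]

theorem blockCount_singleton (ℓ m c : ℕ) (hm : ℓ = 2*m) (hm1 : 1 ≤ m)
    (hc1 : 1 ≤ c) (hcl : c ≤ ℓ) :
    blockCount (deltaWord ℓ) [c] = 2 := by
  set f : ℕ → Bool := fun x => decide (x = c) with hfdef
  rw [blockCount_congr (deltaWord ℓ) [c] f (fun x _ => by simp [hfdef])]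
  rw [delta_eq ℓ m hm, List.map_append]
  have hfirst : (List.range' 1 ℓ).map f =
      List.replicate (c-1) false ++ ([true] ++ List.replicate (ℓ-c) false) := by
    have h1 : List.range' 1 (c-1) ++ List.range' (1+(c-1)) 1 = List.range' 1 (1 + (c-1)) :=
      by rw [List.range'_append_1]; congr 1; omega
    have h : List.range' 1 ℓ =
        (List.range' 1 (c-1) ++ List.range' (1+(c-1)) 1) ++ List.range' (1+(1+(c-1))) (ℓ-c) := by
      rw [h1, List.range'_append_1]; congr 1; omega
    rw [h, List.map_append, List.map_append, List.append_assoc]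
    congr 1
    · rw [map_eq_replicate _ _ false (fun x hx => by
        rw [mem_range1] at hx; exact decide_eq_false (by omega))]
      simp
    congr 1
    · rw [List.range'_one, List.map_cons, List.map_nil,
        show (1+(c-1)) = c from by omega]
      simp [hfdef]
    · rw [map_eq_replicate _ _ false (fun x hx => by
        rw [mem_range1] at hx; exact decide_eq_false (by omega))]
      simp
  rw [hfirst]
  by_cases hcm : c ≤ m
  · have hsecond : (gseq ℓ m).map f =
        List.replicate (2*(c-1)) false ++ ([true, false] ++ List.replicate (2*(m-c)) false) := by
      unfold gseq
      have h1 : List.range' 1 (c-1) ++ List.range' (1+(c-1)) 1 = List.range' 1 (1 + (c-1)) :=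
        by rw [List.range'_append_1]; congr 1; omega
      have h : List.range' 1 m =
          (List.range' 1 (c-1) ++ List.range' (1+(c-1)) 1) ++ List.range' (1+(1+(c-1))) (m-c) := by
        rw [h1, List.range'_append_1]; congr 1; omega
      rw [h, List.flatMap_append, List.flatMap_append, List.map_append, List.map_append,
        List.map_flatMap, List.map_flatMap, List.map_flatMap, List.append_assoc]
      congr 1
      · rw [flatMap_eq_flatten_replicate _ [false, false] _ (fun x hx => by
          rw [mem_range1] at hx
          simp only [List.map_cons, List.map_nil]
          rw [show f x = false from decide_eq_false (by omega),
            show f (ℓ+1-x) = false from decide_eq_false (by omega)]),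
          List.length_range', flatten_replicate_pair]
      congr 1
      · rw [List.range'_one, List.flatMap_cons, List.flatMap_nil, List.append_nil,
          List.map_cons, List.map_cons, List.map_nil,
          show (1+(c-1)) = c from by omega,
          show f c = true from decide_eq_true rfl,
          show f (ℓ+1-c) = false from decide_eq_false (by omega)]
      · rw [flatMap_eq_flatten_replicate _ [false, false] _ (fun x hx => by
          rw [mem_range1] at hx
          simp only [List.map_cons, List.map_nil]
          rw [show f x = false from decide_eq_false (by omega),
            show f (ℓ+1-x) = false from decide_eq_false (by omega)]),
          List.length_range', flatten_replicate_pair]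
    rw [hsecond]
    rw [show ℓ - c = (ℓ - c - 1) + 1 from by omega]
    have e2 : ∀ n : ℕ, (List.replicate n false).getLast?.getD false = false := fun n => by
      rw [List.getLast?_replicate]
      split_ifs <;> rfl
    have e3 : ∀ (n : ℕ) (p : Bool), (List.replicate (n+1) false).getLast?.getD p = false :=
      fun n p => by rw [List.getLast?_replicate]; simp
    simp [blocksAux_append, getLastD_append, getLastD_replicate,
      blocksAux_replicate_false, blocksAux, e2, e3]
  · have hsecond : (gseq ℓ m).map f =
        List.replicate (2*(ℓ-c)) false ++ ([false, true] ++ List.replicate (2*(c-m-1)) false) := by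
      unfold gseq
      set k := ℓ + 1 - c with hk
      have h1 : List.range' 1 (k-1) ++ List.range' (1+(k-1)) 1 = List.range' 1 (1 + (k-1)) :=
        by rw [List.range'_append_1]; congr 1; omega
      have h : List.range' 1 m =
          (List.range' 1 (k-1) ++ List.range' (1+(k-1)) 1) ++ List.range' (1+(1+(k-1))) (m-k) := by
        rw [h1, List.range'_append_1]; congr 1; omega
      rw [h, List.flatMap_append, List.flatMap_append, List.map_append, List.map_append,
        List.map_flatMap, List.map_flatMap, List.map_flatMap, List.append_assoc]
      congr 1
      · rw [flatMap_eq_flatten_replicate _ [false, false] _ (fun x hx => by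
          rw [mem_range1] at hx
          simp only [List.map_cons, List.map_nil]
          rw [show f x = false from decide_eq_false (by omega),
            show f (ℓ+1-x) = false from decide_eq_false (by omega)]),
          List.length_range', flatten_replicate_pair,
          show k - 1 = ℓ - c from by omega]
      congr 1
      · rw [List.range'_one, List.flatMap_cons, List.flatMap_nil, List.append_nil,
          List.map_cons, List.map_cons, List.map_nil,
          show (1+(k-1)) = k from by omega,
          show f k = false from decide_eq_false (by omega),
          show f (ℓ+1-k) = true from decide_eq_true (by omega)]
      · rw [flatMap_eq_flatten_replicate _ [false, false] _ (fun x hx => by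
          rw [mem_range1] at hx
          simp only [List.map_cons, List.map_nil]
          rw [show f x = false from decide_eq_false (by omega),
            show f (ℓ+1-x) = false from decide_eq_false (by omega)]),
          List.length_range', flatten_replicate_pair,
          show m - k = c - m - 1 from by omega]
    rw [hsecond]
    have e2 : ∀ n : ℕ, (List.replicate n false).getLast?.getD false = false := fun n => by
      rw [List.getLast?_replicate]
      split_ifs <;> rfl
    simp [blocksAux_append, getLastD_append, getLastD_replicate,
      blocksAux_replicate_false, blocksAux, e2]

theorem two_le_marking (ℓ m : ℕ) (hm : ℓ = 2*m) (hm1 : 1 ≤ m) (σ : List ℕ)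
    (hσ : IsMarkingSeq (deltaWord ℓ) σ) : 2 ≤ markingNumber (deltaWord ℓ) σ := by
  obtain ⟨hnd, htf⟩ := hσ
  have h1 : (1 : ℕ) ∈ σ := by
    have : (1 : ℕ) ∈ (deltaWord ℓ).toFinset := by
      rw [List.mem_toFinset, mem_delta ℓ m 1 hm hm1]; omega
    rw [← htf, List.mem_toFinset] at this
    exact this
  obtain ⟨c, t, rfl⟩ : ∃ c t, σ = c :: t := by
    cases σ with
    | nil => simp at h1
    | cons c t => exact ⟨c, t, rfl⟩
  have hc : c ∈ deltaWord ℓ := by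
    have : c ∈ (c :: t).toFinset := by simp
    rw [htf, List.mem_toFinset] at this
    exact this
  rw [mem_delta ℓ m c hm hm1] at hc
  have hmem : (1 : ℕ) ∈ Finset.range ((c :: t).length + 1) := by
    simp
  refine le_trans (le_of_eq ?_)
    (Finset.le_sup (f := fun i => blockCount (deltaWord ℓ) ((c :: t).take i)) hmem)
  show 2 = blockCount (deltaWord ℓ) ((c :: t).take 1)
  rw [show (c :: t).take 1 = [c] from rfl, blockCount_singleton ℓ m c hm hm1 hc.1 hc.2]

theorem indexOf_delta (ℓ m x : ℕ) (hm : ℓ = 2*m) (hx1 : 1 ≤ x) (hx2 : x ≤ ℓ) :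
    (deltaWord ℓ).idxOf x = x - 1 := by
  rw [delta_eq ℓ m hm, List.idxOf_append_of_mem (by rw [mem_range1]; omega),
    indexOf_range' 1 ℓ x hx1 (by omega)]

theorem greedy_eq (ℓ m : ℕ) (hm : ℓ = 2*m) (hm1 : 1 ≤ m) (σ : List ℕ)
    (hσ : IsLRGreedy (deltaWord ℓ) σ) : σ = List.range' 1 ℓ := by
  obtain ⟨⟨hnd, htf⟩, hgreedy⟩ := hσ
  have hlen : σ.length = ℓ := by
    have h1 : σ.toFinset.card = σ.length := List.toFinset_card_of_nodup hnd
    have h2 : (List.range' 1 ℓ).toFinset.card = ℓ := by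
      rw [List.toFinset_card_of_nodup (List.nodup_range'), List.length_range']
    rw [htf, toFinset_delta ℓ m hm hm1, h2] at h1
    exact h1.symm
  have key : ∀ i, i < ℓ → σ[i]? = some (i+1) := by
    intro i
    induction i using Nat.strong_induction_on with
    | _ i IH =>
      intro hi
      have htake : σ.take i = List.range' 1 i := by
        apply List.ext_getElem
        · simp [hlen]; omega
        · intro k hk1 hk2
          have hk : k < i := by
            simp [hlen] at hk1; omega
          have hgk := IH k hk (by omega)
          rw [List.getElem?_eq_some_iff] at hgk
          obtain ⟨hlt, hv⟩ := hgk
          rw [List.getElem_take, hv, List.getElem_range'_1]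
          omega
      have hiσ : i < σ.length := by omega
      have hc : σ[i]? = some σ[i] := by
        rw [List.getElem?_eq_some_iff]
        exact ⟨hiσ, rfl⟩
      set c := σ[i] with hcdef
      have hcmem : c ∈ deltaWord ℓ := by
        have : c ∈ σ.toFinset := by
          rw [List.mem_toFinset]; exact List.getElem_mem _
        rw [htf, List.mem_toFinset] at this
        exact this
      have hcb := (mem_delta ℓ m c hm hm1).mp hcmem
      have hcnot : c ∉ σ.take i := by
        intro hmem
        have hsplit := List.take_append_drop i σ
        have hnd2 := hsplit ▸ hnd
        have hdisj := (List.nodup_append.mp hnd2).2.2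
        have hcd : c ∈ σ.drop i := by
          have hlt : i + 0 < σ.length := by omega
          have h0 := List.getElem_drop' (xs := σ) (i := i) (j := 0) hlt
          rw [hcdef]
          have h1 : σ[i] = σ[i+0]'hlt := by congr 1
          rw [h1, h0]
          exact List.getElem_mem _
        exact hdisj c hmem c hcd rfl
      have hy : (i+1) ∈ deltaWord ℓ := by
        rw [mem_delta ℓ m (i+1) hm hm1]; omega
      have hynot : (i+1) ∉ σ.take i := by
        rw [htake, mem_range1]; omega
      have hle := hgreedy i c hc (i+1) hy hynot
      rw [indexOf_delta ℓ m c hm hcb.1 hcb.2, indexOf_delta ℓ m (i+1) hm (by omega) (by omega)] at hle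
      have hcge : i + 1 ≤ c := by
        by_contra hcon
        exact hcnot (by rw [htake, mem_range1]; omega)
      rw [hc, show c = i + 1 from by omega]
  apply List.ext_getElem
  · simp [hlen]
  · intro k hk1 hk2
    have := key k (by omega)
    rw [List.getElem?_eq_some_iff] at this
    obtain ⟨hlt, hv⟩ := this
    rw [hv, List.getElem_range'_1]
    omega

theorem blockCount_half (ℓ m : ℕ) (hm : ℓ = 2*m) (hm1 : 1 ≤ m) :
    blockCount (deltaWord ℓ) (List.range' 1 m) = m + 1 := by
  set f : ℕ → Bool := fun x => decide (1 ≤ x ∧ x ≤ m) with hfdef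
  rw [blockCount_congr (deltaWord ℓ) (List.range' 1 m) f (fun x _ => by
    rw [mem_range1, hfdef]
    simp
    omega)]
  rw [delta_eq ℓ m hm, List.map_append]
  rw [map_mem_first ℓ f m 0 (by omega)
    (fun x h1 h2 => decide_eq_true ⟨h1, h2⟩)
    (fun x h1 h2 => decide_eq_false (by omega))
    (fun x h1 h2 => absurd h2 (by omega))]
  have hsec : (gseq ℓ m).map f = (List.replicate m [true, false]).flatten := by
    unfold gseq
    rw [List.map_flatMap, flatMap_eq_flatten_replicate _ [true, false] _ (fun x hx => by
      rw [mem_range1] at hx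
      simp only [List.map_cons, List.map_nil]
      rw [show f x = true from decide_eq_true ⟨by omega, by omega⟩,
        show f (ℓ+1-x) = false from decide_eq_false (by omega)]),
      List.length_range']
  rw [hsec]
  have e2 : ∀ n : ℕ, (List.replicate n false).getLast?.getD false = false := fun n => by
    rw [List.getLast?_replicate]
    split_ifs <;> rfl
  have hm0 : ¬ (m = 0) := by omega
  have hx : ℓ - (m + 0) = (m-1) + 1 := by omega
  rw [hx]
  have e3 : ∀ (n : ℕ) (p : Bool), (List.replicate (n+1) false).getLast?.getD p = false :=
    fun n p => by rw [List.getLast?_replicate]; simp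
  simp [blocksAux_append, getLastD_append, getLastD_replicate, e2, e3,
    blocksAux_replicate_false, blocksAux_replicate_true, blocksAux_flatten_tf, hm0]
  omega

theorem greedy_bound (ℓ m : ℕ) (σ : List ℕ) (hm : ℓ = 2*m) (hm1 : 1 ≤ m)
    (hσ : IsLRGreedy (deltaWord ℓ) σ) : ℓ/2 ≤ markingNumber (deltaWord ℓ) σ := by
  have hσeq := greedy_eq ℓ m hm hm1 σ hσ
  subst hσeq
  unfold markingNumber
  rw [List.length_range']
  have hmem : m ∈ Finset.range (ℓ+1) := by
    rw [Finset.mem_range]; omega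
  refine le_trans ?_
    (Finset.le_sup (f := fun i => blockCount (deltaWord ℓ) ((List.range' 1 ℓ).take i)) hmem)
  show ℓ/2 ≤ blockCount (deltaWord ℓ) ((List.range' 1 ℓ).take m)
  have hsplit : List.range' 1 ℓ = List.range' 1 m ++ List.range' (1+m) m := by
    rw [List.range'_append_1]; congr 1; omega
  have htake : (List.range' 1 ℓ).take m = List.range' 1 m := by
    rw [hsplit, List.take_left' (by simp)]
  rw [htake, blockCount_half ℓ m hm hm1]
  omega

theorem lr_greedy_bad' (ℓ : ℕ) (h2 : 2 ≤ ℓ) (heven : Even ℓ) :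
    locality (deltaWord ℓ) = 2 ∧
    (∀ σ, IsLRGreedy (deltaWord ℓ) σ → ℓ / 2 ≤ markingNumber (deltaWord ℓ) σ) ∧
    (∀ σ, IsLRGreedy (deltaWord ℓ) σ →
      (ℓ : ℚ) / 4 ≤ (markingNumber (deltaWord ℓ) σ : ℚ) / (locality (deltaWord ℓ) : ℚ)) := by
  obtain ⟨m, hm'⟩ := heven
  have hm : ℓ = 2*m := by omega
  have hm1 : 1 ≤ m := by omega
  obtain ⟨hseq, hval⟩ := gseq_marking ℓ m hm hm1
  have hmem2 : 2 ∈ {n | ∃ σ, IsMarkingSeq (deltaWord ℓ) σ ∧ markingNumber (deltaWord ℓ) σ = n} :=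
    ⟨gseq ℓ m, hseq, hval⟩
  have hloc : locality (deltaWord ℓ) = 2 := by
    unfold locality
    apply le_antisymm
    · exact Nat.sInf_le hmem2
    · refine le_csInf ⟨2, hmem2⟩ ?_
      rintro n ⟨σ, hσ, rfl⟩
      exact two_le_marking ℓ m hm hm1 σ hσ
  refine ⟨hloc, fun σ hσ => greedy_bound ℓ m σ hm hm1 hσ, fun σ hσ => ?_⟩
  have hb := greedy_bound ℓ m σ hm hm1 hσ
  rw [hloc]
  have h1 : (m:ℚ) ≤ (markingNumber (deltaWord ℓ) σ : ℚ) := by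
    exact_mod_cast le_trans (by omega : m ≤ ℓ/2) hb
  have h2 : (ℓ:ℚ) = 2*(m:ℚ) := by exact_mod_cast hm
  rw [h2]
  push_cast
  linarith

/-- For every even `ℓ ≥ 2`: `loc(δ) = 2`, every left-to-right greedy marking
sequence for `δ` has marking number at least `ℓ/2`, and hence the approximation
ratio of this greedy strategy on `δ` is at least `ℓ/4`. -/
theorem lr_greedy_bad (ℓ : ℕ) (h2 : 2 ≤ ℓ) (heven : Even ℓ) :
    locality (deltaWord ℓ) = 2 ∧
    (∀ σ, IsLRGreedy (deltaWord ℓ) σ → ℓ / 2 ≤ markingNumber (deltaWord ℓ) σ) ∧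
    (∀ σ, IsLRGreedy (deltaWord ℓ) σ →
      (ℓ : ℚ) / 4 ≤ (markingNumber (deltaWord ℓ) σ : ℚ) / (locality (deltaWord ℓ) : ℚ)) := by
  exact lr_greedy_bad' ℓ h2 heven
end
end

section
/- For every k ≥ 1, every block-extension marking sequence for the word α = x₁ y x₂ y x₃ y ⋯ x_{2k} y achieves a marking number of at least 2k − 1, whereas loc(α) ≤ k. Hence block-extension greedy strategies have approximation ratio at least 2 − 1/k on α. -/
noncomputable section

attribute [local instance] Classical.propDecidable

variable {X : Type*} [DecidableEq X]

/-- `σ` is a block-extension marking sequence for `w`: every letter marked after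
the first has, at the moment it is marked, at least one occurrence adjacent to an
already-marked position. -/
def IsBESeq (w σ : List X) : Prop :=
  IsMarkingSeq w σ ∧
    ∀ i c, 1 ≤ i → σ[i]? = some c →
      ∃ p, w[p]? = some c ∧
        ((1 ≤ p ∧ ∃ b, w[p - 1]? = some b ∧ b ∈ σ.take i) ∨
          (∃ b, w[p + 1]? = some b ∧ b ∈ σ.take i))

/-- The word `α = x₁ y x₂ y x₃ y ⋯ x_{2k} y`, with `x_i = i` and `y = 0`. -/
def beWord (k : ℕ) : List ℕ :=
  (List.range' 1 (2 * k)).flatMap (fun i => [i, 0])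

lemma blocksAux_flat_true (f : ℕ → Bool) :
    ∀ n a, blocksAux true ((List.range' a n).flatMap (fun i => [f i, true]))
      = ((List.range' a n).filter (fun i => !f i)).length := by
  intro n
  induction n with
  | zero => intro a; simp [blocksAux]
  | succ n ih =>
    intro a
    rw [List.range'_succ, List.flatMap_cons, List.filter_cons]
    cases h : f a <;> simp [blocksAux, h, ih (a + 1)] <;> omega

lemma blocksAux_flat_true' (f : ℕ → Bool) (n a : ℕ) :
    blocksAux false ((List.range' a (n + 1)).flatMap (fun i => [f i, true]))
      = 1 + ((List.range' (a + 1) n).filter (fun i => !f i)).length := by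
  rw [List.range'_succ, List.flatMap_cons]
  cases h : f a <;> simp [blocksAux, h, blocksAux_flat_true]

lemma blocksAux_flat_false (f : ℕ → Bool) :
    ∀ n a, blocksAux false ((List.range' a n).flatMap (fun i => [f i, false]))
      = ((List.range' a n).filter f).length := by
  intro n
  induction n with
  | zero => intro a; simp [blocksAux]
  | succ n ih =>
    intro a
    rw [List.range'_succ, List.flatMap_cons, List.filter_cons]
    cases h : f a <;> simp [blocksAux, h, ih (a + 1)] <;> omega

lemma blockCount_not_mem (k : ℕ) (S : List ℕ) (h : (0 : ℕ) ∉ S) :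
    blockCount (beWord k) S
      = ((List.range' 1 (2 * k)).filter (fun i => decide (i ∈ S))).length := by
  unfold blockCount beWord
  rw [List.map_flatMap]
  have he : (fun i => List.map (fun x => decide (x ∈ S)) [i, (0 : ℕ)])
      = fun i => [decide (i ∈ S), false] := by
    funext i; simp [h]
  rw [he, blocksAux_flat_false]

lemma blockCount_mem (k : ℕ) (hk : 1 ≤ k) (S : List ℕ) (h : (0 : ℕ) ∈ S) :
    blockCount (beWord k) S
      = 1 + ((List.range' 2 (2 * k - 1)).filter (fun i => !decide (i ∈ S))).length := by
  unfold blockCount beWord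
  rw [List.map_flatMap]
  have he : (fun i => List.map (fun x => decide (x ∈ S)) [i, (0 : ℕ)])
      = fun i => [decide (i ∈ S), true] := by
    funext i; simp [h]
  rw [he, show 2 * k = (2 * k - 1) + 1 by omega, blocksAux_flat_true']
  norm_num

lemma mem_beWord {k x : ℕ} (hk : 1 ≤ k) : x ∈ beWord k ↔ x ≤ 2 * k := by
  simp only [beWord, List.mem_flatMap, List.mem_range', List.mem_cons,
    List.mem_singleton, List.not_mem_nil, or_false]
  constructor
  · rintro ⟨i, ⟨j, hj, rfl⟩, h⟩; omega
  · intro hx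
    by_cases h0 : x = 0
    · exact ⟨1, ⟨0, by omega, by omega⟩, Or.inr h0⟩
    · exact ⟨x, ⟨x - 1, by omega, by omega⟩, Or.inl rfl⟩

lemma get?_flat_pair (f : ℕ → ℕ) (c : ℕ) :
    ∀ n a p, ((List.range' a n).flatMap (fun i => [f i, c]))[p]?
      = if p < 2 * n then some (if p % 2 = 0 then f (a + p / 2) else c) else none := by
  intro n
  induction n with
  | zero => intro a p; simp
  | succ n ih =>
    intro a p
    rw [List.range'_succ, List.flatMap_cons]
    match p with
    | 0 => simp
    | 1 => simp
           omega
    | (p + 2) =>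
      simp only [List.cons_append, List.nil_append, List.getElem?_cons_succ]
      rw [ih (a + 1) p]
      simp only [show (p + 2) % 2 = p % 2 from by omega,
        show a + (p + 2) / 2 = a + 1 + p / 2 from by omega,
        show (p + 2 < 2 * (n + 1)) ↔ (p < 2 * n) from by omega]

lemma get?_beWord (k p : ℕ) :
    (beWord k)[p]?
      = if p < 4 * k then some (if p % 2 = 0 then 1 + p / 2 else 0) else none := by
  have h := get?_flat_pair (fun i => i) 0 (2 * k) 1 p
  rw [show 2 * (2 * k) = 4 * k by ring] at h
  exact h

lemma beWord_odd {k p c : ℕ} (h : (beWord k)[p]? = some c) (hp : p % 2 = 1) : c = 0 := by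
  rw [get?_beWord] at h
  by_cases h1 : p < 4 * k
  · rw [if_pos h1, if_neg (by omega)] at h
    exact (Option.some_inj.mp h).symm
  · rw [if_neg h1] at h
    cases h

lemma beWord_even {k p c : ℕ} (h : (beWord k)[p]? = some c) (hc : c ≠ 0) : p % 2 = 0 := by
  by_contra hodd
  exact hc (beWord_odd h (by omega))

lemma filter_mem_length_le (l S : List ℕ) (hl : l.Nodup) :
    (l.filter (fun x => decide (x ∈ S))).length ≤ S.length := by
  have h1 : (l.filter (fun x => decide (x ∈ S))).Nodup := hl.filter _
  have h2 : (l.filter (fun x => decide (x ∈ S))) ⊆ S := by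
    intro x hx
    have := List.of_mem_filter hx
    simpa using this
  exact (List.subperm_of_subset h1 h2).length_le

lemma blockCount_y (k : ℕ) (hk : 1 ≤ k) : blockCount (beWord k) [0] = 2 * k := by
  rw [blockCount_mem k hk _ (by simp)]
  have h : ∀ i ∈ List.range' 2 (2 * k - 1), (!decide (i ∈ [(0 : ℕ)])) = true := by
    intro i hi
    simp only [List.mem_range'] at hi
    obtain ⟨j, hj, rfl⟩ := hi
    simp
  rw [List.filter_eq_self.mpr h]
  simp
  omega

lemma blockCount_x0 (k a : ℕ) (hk : 1 ≤ k) (ha : a ≠ 0) :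
    2 * k - 1 ≤ blockCount (beWord k) [a, 0] := by
  rw [blockCount_mem k hk _ (by simp)]
  have hsplit := List.length_eq_length_filter_add
    (l := List.range' 2 (2 * k - 1)) (fun i => !decide (i ∈ [a, 0]))
  have hle : (List.filter (fun i => !(!decide (i ∈ [a, 0]))) (List.range' 2 (2 * k - 1))).length
      ≤ 1 := by
    rw [← List.countP_eq_length_filter]
    have hmono : (List.range' 2 (2 * k - 1)).countP (fun i => !(!decide (i ∈ [a, 0])))
        ≤ (List.range' 2 (2 * k - 1)).countP (fun i => i == a) := by
      apply List.countP_mono_left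
      intro x hx hpx
      simp only [List.mem_range'] at hx
      simp only [Bool.not_not, decide_eq_true_eq, List.mem_cons, List.mem_singleton,
        List.not_mem_nil, or_false] at hpx
      obtain ⟨j, hj, rfl⟩ := hx
      simp only [beq_iff_eq]
      omega
    refine le_trans hmono ?_
    have : (List.range' 2 (2 * k - 1)).countP (fun i => i == a)
        = (List.range' 2 (2 * k - 1)).count a := rfl
    rw [this]
    exact List.nodup_iff_count_le_one.mp (List.nodup_range') a
  simp only [List.length_range'] at hsplit
  omega

lemma card_toFinset_beWord (k : ℕ) (hk : 1 ≤ k) :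
    (beWord k).toFinset = Finset.range (2 * k + 1) := by
  ext x
  simp only [List.mem_toFinset, mem_beWord hk, Finset.mem_range]
  omega

lemma markingNumber_ge (w σ : List ℕ) (i : ℕ) (hi : i ≤ σ.length) :
    blockCount w (σ.take i) ≤ markingNumber w σ :=
  Finset.le_sup (f := fun i => blockCount w (σ.take i)) (Finset.mem_range.mpr (by omega))

lemma be_lower (k : ℕ) (hk : 1 ≤ k) (σ : List ℕ) (h : IsBESeq (beWord k) σ) :
    2 * k - 1 ≤ markingNumber (beWord k) σ := by
  obtain ⟨⟨hnd, hfin⟩, hbe⟩ := h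
  have hlen : σ.length = 2 * k + 1 := by
    rw [← List.toFinset_card_of_nodup hnd, hfin, card_toFinset_beWord k hk, Finset.card_range]
  rcases σ with _ | ⟨a, σ'⟩
  · simp at hlen
  rcases σ' with _ | ⟨b, σ''⟩
  · simp at hlen; omega
  by_cases ha : a = 0
  · subst ha
    have h1 : blockCount (beWord k) ((0 :: b :: σ'').take 1) = 2 * k := by
      simpa using blockCount_y k hk
    calc 2 * k - 1 ≤ 2 * k := by omega
      _ = blockCount (beWord k) ((0 :: b :: σ'').take 1) := h1.symm
      _ ≤ _ := markingNumber_ge _ _ 1 (by simp)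
  · obtain ⟨p, hp, hside⟩ := hbe 1 b (le_refl 1) rfl
    have hb0 : b = 0 := by
      rcases hside with ⟨hp1, bb, hbb, hmem⟩ | ⟨bb, hbb, hmem⟩
      · have hba : bb = a := by simpa using hmem
        subst hba
        have heven := beWord_even hbb ha
        exact beWord_odd hp (by omega)
      · have hba : bb = a := by simpa using hmem
        subst hba
        have heven := beWord_even hbb ha
        exact beWord_odd hp (by omega)
    subst hb0
    calc 2 * k - 1 ≤ blockCount (beWord k) [a, 0] := blockCount_x0 k a hk ha
      _ = blockCount (beWord k) ((a :: 0 :: σ'').take 2) := rfl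
      _ ≤ _ := markingNumber_ge _ _ 2 (by simp)

lemma take_range' : ∀ (n a i : ℕ), (List.range' a n).take i = List.range' a (min i n) := by
  intro n
  induction n with
  | zero => intro a i; simp
  | succ n ih =>
    intro a i
    rw [List.range'_succ]
    match i with
    | 0 => simp
    | (i + 1) =>
      rw [List.take_succ_cons, ih (a + 1) i, show min (i + 1) (n + 1) = (min i n) + 1 by omega,
        List.range'_succ]

def beSigma (k : ℕ) : List ℕ := List.range' 2 k ++ 0 :: 1 :: List.range' (k + 2) (k - 1)

lemma beSigma_marking (k : ℕ) (hk : 1 ≤ k) : IsMarkingSeq (beWord k) (beSigma k) := by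
  constructor
  · rw [beSigma, List.nodup_append]
    refine ⟨List.nodup_range', ?_, ?_⟩
    · simp only [List.nodup_cons, List.mem_cons, List.mem_range']
      refine ⟨?_, ?_, List.nodup_range'⟩
      · rintro (h | ⟨j, hj, h⟩) <;> omega
      · rintro ⟨j, hj, h⟩; omega
    · intro x hx y hx'
      simp only [List.mem_range'] at hx
      simp only [List.mem_cons, List.mem_range'] at hx'
      obtain ⟨j, hj, rfl⟩ := hx
      rcases hx' with h | h | ⟨j', hj', h⟩ <;> omega
  · ext x
    simp only [beSigma, List.toFinset_append, Finset.mem_union, List.mem_toFinset,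
      List.mem_append, List.mem_cons, List.mem_range', mem_beWord hk]
    constructor
    · rintro (⟨j, hj, rfl⟩ | h | h | ⟨j, hj, rfl⟩) <;> omega
    · intro hx
      by_cases h0 : x = 0
      · exact Or.inr (Or.inl h0)
      by_cases h1 : x = 1
      · exact Or.inr (Or.inr (Or.inl h1))
      by_cases h2 : x ≤ k + 1
      · exact Or.inl ⟨x - 2, by omega, by omega⟩
      · exact Or.inr (Or.inr (Or.inr ⟨x - (k + 2), by omega, by omega⟩))

lemma beSigma_bound (k : ℕ) (hk : 1 ≤ k) : markingNumber (beWord k) (beSigma k) ≤ k := by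
  apply Finset.sup_le
  intro i _
  by_cases hik : i ≤ k
  · have htake : (beSigma k).take i = List.range' 2 i := by
      rw [beSigma, List.take_append_of_le_length (by simp; omega), take_range']
      congr 1
      omega
    rw [htake, blockCount_not_mem]
    · calc ((List.range' 1 (2 * k)).filter (fun x => decide (x ∈ List.range' 2 i))).length
          ≤ (List.range' 2 i).length := filter_mem_length_le _ _ (List.nodup_range')
        _ = i := by simp
        _ ≤ k := hik
    · simp only [List.mem_range']
      rintro ⟨j, hj, h⟩; omega
  · obtain ⟨t, ht⟩ : ∃ t, (beSigma k).take i = List.range' 2 k ++ 0 :: t := by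
      rw [beSigma, List.take_append,
        List.take_of_length_le (by simp; omega),
        show i - (List.range' 2 k).length = (i - k - 1) + 1 by simp; omega,
        List.take_succ_cons]
      exact ⟨_, rfl⟩
    rw [ht, blockCount_mem k hk _ (by simp)]
    rw [show 2 * k - 1 = k + (k - 1) by omega, ← List.range'_append_1]
    rw [List.filter_append]
    have h1 : (List.range' 2 k).filter
        (fun x => !decide (x ∈ List.range' 2 k ++ 0 :: t)) = [] := by
      apply List.filter_eq_nil_iff.mpr
      intro x hx
      simp [hx]
    rw [h1, List.nil_append]
    have h2 := List.length_filter_le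
      (fun x => !decide (x ∈ List.range' 2 k ++ 0 :: t)) (List.range' (2 + k) (k - 1))
    simp only [List.length_range'] at h2
    omega

lemma one_le_blocksAux : ∀ l : List Bool, true ∈ l → 1 ≤ blocksAux false l := by
  intro l
  induction l with
  | nil => simp
  | cons b t ih =>
    intro h
    cases b
    · have : true ∈ t := by simpa using h
      simpa [blocksAux] using ih this
    · simp [blocksAux]

lemma blockCount_pos (w S : List X) (x : X) (hxw : x ∈ w) (hxS : x ∈ S) :
    1 ≤ blockCount w S := by
  apply one_le_blocksAux
  simp only [List.mem_map]
  exact ⟨x, hxw, by simp [hxS]⟩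

lemma locality_pos (k : ℕ) (hk : 1 ≤ k) : 1 ≤ locality (beWord k) := by
  have hne : {n | ∃ σ, IsMarkingSeq (beWord k) σ ∧ markingNumber (beWord k) σ = n}.Nonempty :=
    ⟨_, beSigma k, beSigma_marking k hk, rfl⟩
  have hmem : locality (beWord k)
      ∈ {n | ∃ σ, IsMarkingSeq (beWord k) σ ∧ markingNumber (beWord k) σ = n} :=
    Nat.sInf_mem hne
  obtain ⟨σ, ⟨hnd, hfin⟩, hval⟩ := hmem
  rw [← hval]
  rcases σ with _ | ⟨a, t⟩
  · exfalso
    have h0 : (0 : ℕ) ∈ (beWord k).toFinset := by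
      rw [List.mem_toFinset, mem_beWord hk]; omega
    rw [← hfin] at h0
    simp at h0
  · have haw : a ∈ beWord k := by
      have h1 : a ∈ (a :: t).toFinset := by simp
      rw [hfin, List.mem_toFinset] at h1
      exact h1
    calc 1 ≤ blockCount (beWord k) ((a :: t).take 1) :=
        blockCount_pos _ _ a haw (by simp)
      _ ≤ markingNumber (beWord k) (a :: t) := markingNumber_ge _ _ 1 (by simp)


/-- For every `k ≥ 1`: every block-extension marking sequence for
`α = x₁ y x₂ y ⋯ x_{2k} y` has marking number at least `2k - 1`, whereas
`loc(α) ≤ k`; hence block-extension greedy strategies have approximation ratio at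
least `2 - 1/k` on `α`. -/
theorem be_greedy_bad (k : ℕ) (hk : 1 ≤ k) :
    (∀ σ, IsBESeq (beWord k) σ → 2 * k - 1 ≤ markingNumber (beWord k) σ) ∧
    locality (beWord k) ≤ k ∧
    (∀ σ, IsBESeq (beWord k) σ →
      (2 : ℚ) - 1 / (k : ℚ) ≤
        (markingNumber (beWord k) σ : ℚ) / (locality (beWord k) : ℚ)) := by
  have hloc : locality (beWord k) ≤ k :=
    le_trans (Nat.sInf_le ⟨beSigma k, beSigma_marking k hk, rfl⟩) (beSigma_bound k hk)
  have hpos := locality_pos k hk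
  refine ⟨fun σ h => be_lower k hk σ h, hloc, fun σ h => ?_⟩
  have hm := be_lower k hk σ h
  have hk0 : (0 : ℚ) < (k : ℚ) := by exact_mod_cast hk
  have hk1 : (1 : ℚ) ≤ (k : ℚ) := by exact_mod_cast hk
  have hL0 : (0 : ℚ) < (locality (beWord k) : ℚ) := by exact_mod_cast hpos
  have hLk : (locality (beWord k) : ℚ) ≤ (k : ℚ) := by exact_mod_cast hloc
  have hmq : (2 * (k : ℚ) - 1) ≤ (markingNumber (beWord k) σ : ℚ) := by
    have h1 := (Nat.cast_le (α := ℚ)).mpr hm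
    rw [Nat.cast_sub (by omega : 1 ≤ 2 * k)] at h1
    push_cast at h1
    linarith
  calc (2 : ℚ) - 1 / (k : ℚ) = (2 * (k : ℚ) - 1) / (k : ℚ) := by
        field_simp
      _ ≤ (2 * (k : ℚ) - 1) / (locality (beWord k) : ℚ) := by
        gcongr
        linarith
      _ ≤ (markingNumber (beWord k) σ : ℚ) / (locality (beWord k) : ℚ) := by
        gcongr
end
end
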